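/- Let A' and B be F_q-subspaces of F_{q^m} with dim A' = α' and dim B = β, and suppose dim(A'B) = α'β. If a is chosen uniformly at random from F_{q^m} and A = A' + ⟨a⟩, then the probability that dim(AB) < α'β + β is at most q^{α'β+β}/q^m. -/
import Mathlib

open Module Submodule

section aux

variable {K L : Type} [Field K] [Field L] [Algebra K L] [Fintype K] [Fintype L]

lemma aux_key (A' B : Submodule K L) (β : ℕ) (hB : Module.finrank K ↥B = β)
    (a : L) (ha : a ≠ 0)
    (h : Module.finrank K ↥((A' ⊔ Submodule.span K {a}) * B)
        < Module.finrank K ↥(A' * B) + β) :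
    ∃ b ∈ B, b ≠ 0 ∧ a * b ∈ A' * B := by
  have hFD : FiniteDimensional K L := Module.Finite.of_finite
  by_contra hcon
  push_neg at hcon
  set f : L →ₗ[K] L := LinearMap.mulLeft K a with hf
  have hinj : Function.Injective f := fun x y hxy => by
    simpa [hf, LinearMap.mulLeft_apply, mul_right_inj' ha] using hxy
  have hmap : Submodule.span K {a} * B = B.map f := by
    ext x
    simp only [Submodule.mem_span_singleton_mul, Submodule.mem_map]
    constructor
    · rintro ⟨z, hz, rfl⟩; exact ⟨z, hz, rfl⟩
    · rintro ⟨z, hz, rfl⟩; exact ⟨z, hz, rfl⟩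
  have hrank : Module.finrank K ↥(B.map f) = β := by
    rw [← hB]
    exact (LinearEquiv.finrank_eq (Submodule.equivMapOfInjective f hinj B)).symm
  have hdisj : (A' * B) ⊓ (B.map f) = ⊥ := by
    rw [Submodule.eq_bot_iff]
    rintro x ⟨hx1, hx2⟩
    obtain ⟨b, hb, rfl⟩ := hx2
    by_contra hne
    have hb0 : b ≠ 0 := fun h0 => by simp [h0, hf] at hne
    exact hcon b hb hb0 hx1
  have hsum : Module.finrank K ↥((A' * B) ⊔ (B.map f))
      = Module.finrank K ↥(A' * B) + β := by
    have := Submodule.finrank_sup_add_finrank_inf_eq (A' * B) (B.map f)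
    rw [hdisj, finrank_bot, add_zero, hrank] at this
    exact this
  have hexp : (A' ⊔ Submodule.span K {a}) * B = (A' * B) ⊔ (B.map f) := by
    rw [Submodule.sup_mul, hmap]
  rw [hexp, hsum] at h
  exact lt_irrefl _ h

end aux

/-- If `A'`, `B` are `F_q`-subspaces of `F_{q^m}` with `dim A' = α'`,
`dim B = β` and `dim (A'B) = α'β`, then for a uniformly random `a` in the big field,
the probability that `dim ((A' + ⟨a⟩)B) < α'β + β` is at most `q^(α'β+β)/q^m`. -/
theorem stmt_0 (q m α' β : ℕ) (hq : 2 ≤ q)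
    (K L : Type) [Field K] [Field L] [Algebra K L] [Fintype K] [Fintype L]
    (hcard : Fintype.card K = q) (hm : Module.finrank K L = m)
    (A' B : Submodule K L)
    (hA' : Module.finrank K ↥A' = α') (hB : Module.finrank K ↥B = β)
    (hA'B : Module.finrank K ↥(A' * B) = α' * β) :
    (Nat.card {a : L // Module.finrank K ↥((A' ⊔ Submodule.span K {a}) * B) < α' * β + β} : ℝ)
      / (Nat.card L : ℝ) ≤ (q : ℝ) ^ (α' * β + β) / (q : ℝ) ^ m := by
  have hFD : FiniteDimensional K L := Module.Finite.of_finite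
  have hL : Nat.card L = q ^ m := by
    rw [Nat.card_eq_fintype_card, card_eq_pow_finrank (K := K), hcard, hm]
  have hq0 : (0:ℝ) < (q:ℝ) := by positivity
  -- cardinality of the bad set
  set Bad := {a : L // Module.finrank K ↥((A' ⊔ Submodule.span K {a}) * B) < α' * β + β}
  have hBadcard : Nat.card Bad ≤ q ^ (α' * β + β) := by
    rcases Nat.eq_zero_or_pos β with hβ0 | hβpos
    · have : IsEmpty Bad := by
        constructor
        rintro ⟨a, ha⟩
        rw [hβ0, Nat.mul_zero, Nat.add_zero] at ha
        exact Nat.not_lt_zero _ ha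
      simp [Nat.card_of_isEmpty]
    · -- every bad a admits a witness b ∈ B, b ≠ 0, a*b ∈ A'*B
      have hwit : ∀ x : Bad, ∃ b : L, b ∈ B ∧ b ≠ 0 ∧ (x : L) * b ∈ A' * B := by
        rintro ⟨a, ha⟩
        rcases eq_or_ne a 0 with rfl | ha0
        · -- a = 0 : any nonzero b in B works
          have : B ≠ ⊥ := by
            intro h
            rw [h] at hB
            simp [finrank_bot] at hB
            omega
          obtain ⟨b, hbB, hb0⟩ := Submodule.exists_mem_ne_zero_of_ne_bot this
          exact ⟨b, hbB, hb0, by simp⟩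
        · obtain ⟨b, hbB, hb0, hab⟩ := aux_key A' B β hB a ha0 (by rwa [hA'B])
          exact ⟨b, hbB, hb0, hab⟩
      choose w hwB hw0 hwab using hwit
      have hinj : Function.Injective
          (fun x : Bad => ((⟨w x, hwB x⟩ : B), (⟨(x : L) * w x, hwab x⟩ : (A' * B)))) := by
        intro x y hxy
        simp only [Prod.mk.injEq, Subtype.mk.injEq] at hxy
        obtain ⟨h1, h2⟩ := hxy
        rw [h1] at h2
        have := mul_right_cancel₀ (hw0 y) h2
        exact Subtype.ext this
      have hle : Nat.card Bad ≤ Nat.card (↥B × ↥(A' * B)) :=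
        Nat.card_le_card_of_injective _ hinj
      haveI : Fintype ↥B := Fintype.ofFinite _
      haveI : Fintype ↥(A' * B) := Fintype.ofFinite _
      have hcB : Nat.card ↥B = q ^ β := by
        rw [Nat.card_eq_fintype_card, card_eq_pow_finrank (K := K), hcard, hB]
      have hcAB : Nat.card ↥(A' * B) = q ^ (α' * β) := by
        rw [Nat.card_eq_fintype_card, card_eq_pow_finrank (K := K), hcard, hA'B]
      rw [Nat.card_prod, hcB, hcAB] at hle
      calc Nat.card Bad ≤ q ^ β * q ^ (α' * β) := hle
        _ = q ^ (α' * β + β) := by rw [← pow_add, Nat.add_comm]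
  rw [hL]
  push_cast
  gcongr
  exact_mod_cast hBadcard
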